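/- arXiv:2411.11703 — 2 statements merged into one kernel-verified Lean document; each statement's English description precedes it below -/
import Mathlib

section
/- Let K ≥ 1, let Ω = {−1,1}^K ⊂ ℝ^K be the vertex set of the hypercube, and define σ(ω) = Π_{k=1}^K ω_k. Then for every ω ∈ Ω, the set Ω_ω of nearest neighbours of ω in Ω consists exactly of the K points obtained from ω by changing the sign of exactly one coordinate, each at distance 2 from ω, and σ(ω) Σ_{ϖ∈Ω_ω} σ(ϖ)(ϖ−ω)/|ϖ−ω| = ω. In particular the hypercube with the alternating (product) signs satisfies the symmetry hypothesis of the multi-soliton construction. -/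
open scoped BigOperators

/-- The set of nearest neighbours of `ω` in a configuration `Ω ⊂ ℝ^d`:
the points of `Ω \ {ω}` minimizing the distance to `ω`. -/
def nearestNeighbours {E : Type*} [NormedAddCommGroup E] (Ω : Set E) (ω : E) : Set E :=
  {ϖ ∈ Ω | ϖ ≠ ω ∧ ∀ ϖ' ∈ Ω, ϖ' ≠ ω → ‖ϖ - ω‖ ≤ ‖ϖ' - ω‖}

private lemma norm_eq_sqrt_card (K : ℕ) (ω ϖ : EuclideanSpace ℝ (Fin K))
    (hω : ∀ i, ω i = 1 ∨ ω i = -1) (hϖ : ∀ i, ϖ i = 1 ∨ ϖ i = -1) :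
    ‖ϖ - ω‖ = 2 * Real.sqrt ((Finset.univ.filter fun i => ϖ i ≠ ω i).card) := by
  have h1 : ‖ϖ - ω‖ = Real.sqrt (∑ i, (ϖ i - ω i) ^ 2) := by
    rw [EuclideanSpace.norm_eq]
    simp only [PiLp.sub_apply, Real.norm_eq_abs, sq_abs]
  have h2 : ∑ i, (ϖ i - ω i) ^ 2 = 4 * (Finset.univ.filter fun i => ϖ i ≠ ω i).card := by
    rw [← Finset.sum_filter_add_sum_filter_not Finset.univ (fun i => ϖ i ≠ ω i)]
    have e1 : ∑ i ∈ Finset.univ.filter fun i => ϖ i ≠ ω i, (ϖ i - ω i) ^ 2 =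
        ∑ i ∈ Finset.univ.filter fun i => ϖ i ≠ ω i, 4 := by
      refine Finset.sum_congr rfl fun i hi => ?_
      simp only [Finset.mem_filter] at hi
      rcases hϖ i with h | h <;> rcases hω i with h' | h' <;>
        simp [h, h'] at hi ⊢ <;> norm_num
    have e2 : ∑ i ∈ Finset.univ.filter fun i => ¬ϖ i ≠ ω i, (ϖ i - ω i) ^ 2 = 0 := by
      refine Finset.sum_eq_zero fun i hi => ?_
      simp only [Finset.mem_filter, not_not] at hi
      simp [hi.2]
    rw [e1, e2, Finset.sum_const, add_zero]
    ring
  rw [h1, h2, show (4 : ℝ) = 2 ^ 2 by norm_num, Real.sqrt_mul (by positivity),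
    Real.sqrt_sq (by norm_num)]

/-- **The hypercube with alternating (product) signs satisfies the symmetry hypothesis of
the multi-soliton construction.** For `Ω = {−1,1}^K` and `σ(ω) = ∏ k ω_k`, the nearest
neighbours of `ω` are exactly the `K` points obtained by flipping one coordinate, each at
distance `2`, and `σ(ω) ∑_{ϖ ∈ Ω_ω} σ(ϖ)(ϖ−ω)/|ϖ−ω| = ω` (i.e. the hypothesis holds with
`γ = 1`). -/
theorem hypercube_alternating_symmetry (K : ℕ) (hK : 1 ≤ K)
    (Ω : Set (EuclideanSpace ℝ (Fin K)))
    (hΩ : Ω = {ω | ∀ i, ω i = 1 ∨ ω i = -1})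
    (σ : EuclideanSpace ℝ (Fin K) → ℝ)
    (hσ : ∀ ω, σ ω = ∏ i, ω i) :
    ∀ ω ∈ Ω,
      nearestNeighbours Ω ω =
        {ϖ | ∃ i : Fin K, ϖ = WithLp.toLp 2 (Function.update ω i (-(ω i)))} ∧
      (∀ ϖ ∈ nearestNeighbours Ω ω, ‖ϖ - ω‖ = 2) ∧
      σ ω • (∑ᶠ ϖ ∈ nearestNeighbours Ω ω, σ ϖ • (‖ϖ - ω‖⁻¹ • (ϖ - ω))) = ω := by
  intro ω hωΩ
  subst hΩ
  have hω : ∀ i, ω i = 1 ∨ ω i = -1 := hωΩ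
  have hωne : ∀ i, ω i ≠ 0 := fun i => by rcases hω i with h | h <;> rw [h] <;> norm_num
  have hflip : ∀ i, -(ω i) ≠ ω i := fun i h => hωne i (by linarith [h])
  set f : Fin K → EuclideanSpace ℝ (Fin K) := fun i => WithLp.toLp 2 (Function.update ω i (-(ω i))) with hf
  have hfapp : ∀ i j, f i j = if j = i then -(ω j) else ω j := by
    intro i j
    by_cases h : j = i
    · subst h; simp [hf]
    · simp [hf, Function.update_of_ne h, h]
  have hfΩ : ∀ i, f i ∈ {ω | ∀ i, ω i = 1 ∨ ω i = -1} := by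
    intro i j
    rw [hfapp]
    split_ifs
    · rcases hω j with h | h <;> rw [h] <;> norm_num
    · exact hω j
  have hfne : ∀ i, f i ≠ ω := by
    intro i h
    exact hflip i (by have := congrFun (congrArg WithLp.ofLp h) i; rwa [hfapp, if_pos rfl] at this)
  -- each flip is at distance 2
  have hfnorm : ∀ i, ‖f i - ω‖ = 2 := by
    intro i
    rw [norm_eq_sqrt_card K ω (f i) hω (hfΩ i)]
    have : (Finset.univ.filter fun j => f i j ≠ ω j) = {i} := by
      ext j
      simp only [Finset.mem_filter, Finset.mem_univ, true_and, Finset.mem_singleton, hfapp]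
      constructor
      · intro h; by_contra hji; exact h (if_neg hji ▸ rfl)
      · intro h; subst h; rw [if_pos rfl]; exact hflip j
    rw [this]
    simp
  -- any other point is at distance ≥ 2
  have hge : ∀ ϖ ∈ {ω | ∀ i, ω i = 1 ∨ ω i = -1}, ϖ ≠ ω → 2 ≤ ‖ϖ - ω‖ := by
    intro ϖ hϖ hne
    rw [norm_eq_sqrt_card K ω ϖ hω hϖ]
    have hcard : 1 ≤ (Finset.univ.filter fun j => ϖ j ≠ ω j).card := by
      rw [Nat.one_le_iff_ne_zero, Ne, Finset.card_eq_zero, Finset.filter_eq_empty_iff]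
      intro h
      apply hne
      ext j
      exact not_not.mp (h (Finset.mem_univ j))
    have : (1 : ℝ) ≤ Real.sqrt ((Finset.univ.filter fun j => ϖ j ≠ ω j).card) := by
      rw [show (1:ℝ) = Real.sqrt 1 by simp]
      exact Real.sqrt_le_sqrt (by exact_mod_cast hcard)
    linarith
  -- nearest neighbour set equality
  have hNN : nearestNeighbours {ω | ∀ i, ω i = 1 ∨ ω i = -1} ω =
      {ϖ | ∃ i : Fin K, ϖ = WithLp.toLp 2 (Function.update ω i (-(ω i)))} := by
    ext ϖ
    constructor
    · rintro ⟨hϖΩ, hne, hmin⟩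
      have i0 : Fin K := ⟨0, hK⟩
      have hle : ‖ϖ - ω‖ ≤ 2 := by
        have := hmin (f i0) (hfΩ i0) (hfne i0)
        rwa [hfnorm i0] at this
      have heq : ‖ϖ - ω‖ = 2 := le_antisymm hle (hge ϖ hϖΩ hne)
      rw [norm_eq_sqrt_card K ω ϖ hω hϖΩ] at heq
      have hs : Real.sqrt ((Finset.univ.filter fun j => ϖ j ≠ ω j).card) = 1 := by linarith
      have hcard : (Finset.univ.filter fun j => ϖ j ≠ ω j).card = 1 := by
        have := Real.sqrt_eq_one.mp hs
        exact_mod_cast this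
      obtain ⟨i, hi⟩ := Finset.card_eq_one.mp hcard
      refine ⟨i, ?_⟩
      ext j
      have hmem : ∀ j, ϖ j ≠ ω j ↔ j = i := by
        intro j
        rw [← Finset.mem_singleton, ← hi]
        simp
      by_cases h : j = i
      · subst h
        have hne' : ϖ j ≠ ω j := (hmem j).mpr rfl
        change ϖ.ofLp j = Function.update ω.ofLp j (-ω.ofLp j) j
        rw [Function.update_self]
        rcases hϖΩ j with h1 | h1 <;> rcases hω j with h2 | h2 <;>
          rw [h1, h2] <;> rw [h1, h2] at hne' <;> simp_all
      · change ϖ.ofLp j = Function.update ω.ofLp i (-ω.ofLp i) j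
        rw [Function.update_of_ne h]
        exact not_not.mp (fun hh => h ((hmem j).mp hh))
    · rintro ⟨i, rfl⟩
      refine ⟨hfΩ i, hfne i, fun ϖ' hϖ' hne' => ?_⟩
      rw [show WithLp.toLp 2 (Function.update ω i (-(ω i))) = f i from rfl, hfnorm i]
      exact hge ϖ' hϖ' hne'
  refine ⟨hNN, fun ϖ hϖ => ?_, ?_⟩
  · rw [hNN] at hϖ
    obtain ⟨i, rfl⟩ := hϖ
    exact hfnorm i
  -- the sum
  have finj : Function.Injective f := by
    intro i j h
    by_contra hij
    have h1 := congrFun (congrArg WithLp.ofLp h) i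
    rw [hfapp, hfapp, if_pos rfl, if_neg hij] at h1
    exact hflip i h1
  have hrange : nearestNeighbours {ω | ∀ i, ω i = 1 ∨ ω i = -1} ω = Set.range f := by
    rw [hNN]
    ext ϖ
    constructor
    · rintro ⟨i, rfl⟩; exact ⟨i, rfl⟩
    · rintro ⟨i, rfl⟩; exact ⟨i, rfl⟩
  rw [hrange, finsum_mem_range finj, finsum_eq_sum_of_fintype]
  -- σ(f i) = -σ ω
  have hσω2 : σ ω * σ ω = 1 := by
    rw [hσ, ← Finset.prod_mul_distrib]
    refine Finset.prod_eq_one fun i _ => ?_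
    rcases hω i with h | h <;> rw [h] <;> norm_num
  have hσf : ∀ i, σ (f i) = -σ ω := by
    intro i
    rw [hσ, hσ, hf]
    simp only [PiLp.toLp_apply]
    rw [Finset.prod_update_of_mem (Finset.mem_univ i)]
    rw [← Finset.mul_prod_erase Finset.univ _ (Finset.mem_univ i), Finset.sdiff_singleton_eq_erase]
    ring
  ext j
  simp only [PiLp.smul_apply, smul_eq_mul]
  rw [WithLp.ofLp_sum, Finset.sum_apply j Finset.univ]
  simp only [PiLp.smul_apply, smul_eq_mul, PiLp.sub_apply]
  rw [Finset.mul_sum, Finset.sum_eq_single j]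
  · rw [hσf, hfnorm, hfapp, if_pos rfl]
    have : -(ω j) - ω j = -2 * ω j := by ring
    rw [this, show σ ω * (-σ ω * (2⁻¹ * (-2 * ω j))) = σ ω * σ ω * ω j by ring, hσω2,
      one_mul]
  · intro i _ hij
    rw [hfapp, if_neg (Ne.symm hij)]
    simp
  · intro h; exact absurd (Finset.mem_univ j) h
end

section
/- Let K ≥ 1 and let Ω = {0} ∪ {e_1,−e_1,…,e_K,−e_K} ⊂ ℝ^K, where e_1,…,e_K is the canonical basis (the vertices of the regular orthoplex together with its center). Set σ(0) = −1 and σ(ω) = +1 for every vertex ω ≠ 0. Then for every vertex ω ≠ 0 the set Ω_ω of nearest neighbours of ω in Ω equals {0}, the set Ω_0 of nearest neighbours of 0 equals the set of all 2K vertices, and for every ω ∈ Ω, σ(ω) Σ_{ϖ∈Ω_ω} σ(ϖ)(ϖ−ω)/|ϖ−ω| = ω. In particular the orthoplex with a center, the center carrying the opposite sign, satisfies the symmetry hypothesis of the multi-soliton construction with γ = 1. -/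
open scoped BigOperators

section aux

variable {K : ℕ}

local notation "e" => fun i : Fin K => EuclideanSpace.single i (1 : ℝ)

lemma single_ne_zero' (i : Fin K) : EuclideanSpace.single i (1 : ℝ) ≠ 0 := by
  intro h
  have := congrArg norm h
  simp at this

lemma single_ne_neg (i j : Fin K) :
    EuclideanSpace.single i (1 : ℝ) ≠ -EuclideanSpace.single j (1 : ℝ) := by
  intro h
  have := congrArg (fun x : EuclideanSpace ℝ (Fin K) => x i) h
  simp only [EuclideanSpace.single_apply] at this
  rw [show (-EuclideanSpace.single j (1:ℝ)) i = -(EuclideanSpace.single j (1:ℝ) i) from rfl,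
    EuclideanSpace.single_apply] at this
  split_ifs at this <;> norm_num at this

lemma inner_vertices_nonpos {v w : EuclideanSpace ℝ (Fin K)}
    (hv : ∃ i : Fin K, v = EuclideanSpace.single i (1 : ℝ) ∨
          v = -EuclideanSpace.single i (1 : ℝ))
    (hw : ∃ i : Fin K, w = EuclideanSpace.single i (1 : ℝ) ∨
          w = -EuclideanSpace.single i (1 : ℝ))
    (hvw : v ≠ w) : inner ℝ v w ≤ (0 : ℝ) := by
  have key : ∀ i j : Fin K, inner ℝ (EuclideanSpace.single i (1:ℝ))
      (EuclideanSpace.single j (1:ℝ)) = if i = j then (1:ℝ) else 0 := by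
    intro i j
    rw [EuclideanSpace.inner_single_left]
    simp [EuclideanSpace.single_apply, eq_comm]
  obtain ⟨i, rfl | rfl⟩ := hv <;> obtain ⟨j, rfl | rfl⟩ := hw
  · rcases eq_or_ne i j with rfl | h
    · exact absurd rfl hvw
    · rw [key, if_neg h]
  · rw [inner_neg_right, key]; split_ifs <;> norm_num
  · rw [inner_neg_left, key]; split_ifs <;> norm_num
  · rcases eq_or_ne i j with rfl | h
    · exact absurd rfl hvw
    · rw [inner_neg_left, inner_neg_right, key, if_neg h]; norm_num

end aux

/-- **The regular orthoplex with a center, the center carrying the opposite sign, satisfies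
the symmetry hypothesis of the multi-soliton construction with `γ = 1`.**
For `Ω = {0} ∪ {±e_1,…,±e_K} ⊂ ℝ^K`, `σ(0) = −1`, `σ = +1` on the vertices: the nearest
neighbours of each vertex `ω ≠ 0` are exactly `{0}`, the nearest neighbours of `0` are all
the `2K` vertices, and `σ(ω) ∑_{ϖ ∈ Ω_ω} σ(ϖ)(ϖ−ω)/|ϖ−ω| = ω` for every `ω ∈ Ω`. -/
theorem orthoplex_with_center_symmetry (K : ℕ) (hK : 1 ≤ K)
    (Ω : Set (EuclideanSpace ℝ (Fin K)))
    (hΩ : Ω = insert (0 : EuclideanSpace ℝ (Fin K))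
        {v | ∃ i : Fin K, v = EuclideanSpace.single i (1 : ℝ) ∨
              v = -EuclideanSpace.single i (1 : ℝ)})
    (σ : EuclideanSpace ℝ (Fin K) → ℝ)
    (hσ0 : σ 0 = -1)
    (hσ1 : ∀ ω ∈ Ω, ω ≠ 0 → σ ω = 1) :
    (∀ ω ∈ Ω, ω ≠ 0 →
        nearestNeighbours Ω ω = {(0 : EuclideanSpace ℝ (Fin K))}) ∧
    nearestNeighbours Ω (0 : EuclideanSpace ℝ (Fin K)) = Ω \ {0} ∧
    ∀ ω ∈ Ω,
      σ ω • (∑ᶠ ϖ ∈ nearestNeighbours Ω ω, σ ϖ • (‖ϖ - ω‖⁻¹ • (ϖ - ω))) = ω := by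
  classical
  have hvert : ∀ v ∈ Ω, v ≠ 0 → ∃ i : Fin K,
      v = EuclideanSpace.single i (1 : ℝ) ∨ v = -EuclideanSpace.single i (1 : ℝ) := by
    intro v hv hv0
    rw [hΩ] at hv
    rcases hv with rfl | h
    · exact absurd rfl hv0
    · exact h
  have hnorm : ∀ v ∈ Ω, v ≠ 0 → ‖v‖ = 1 := by
    intro v hv hv0
    obtain ⟨i, rfl | rfl⟩ := hvert v hv hv0 <;> simp
  have h0Ω : (0 : EuclideanSpace ℝ (Fin K)) ∈ Ω := by rw [hΩ]; exact Set.mem_insert _ _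
  -- distance ≥ 1 between distinct nonzero elements
  have hdist : ∀ v ∈ Ω, ∀ w ∈ Ω, v ≠ 0 → w ≠ 0 → v ≠ w → Real.sqrt 2 ≤ ‖v - w‖ := by
    intro v hv w hw hv0 hw0 hvw
    have h1 : ‖v - w‖ ^ 2 = ‖v‖ ^ 2 - 2 * inner ℝ v w + ‖w‖ ^ 2 := norm_sub_sq_real v w
    rw [hnorm v hv hv0, hnorm w hw hw0] at h1
    have h2 : inner ℝ v w ≤ (0 : ℝ) :=
      inner_vertices_nonpos (hvert v hv hv0) (hvert w hw hw0) hvw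
    have h3 : (2 : ℝ) ≤ ‖v - w‖ ^ 2 := by nlinarith
    calc Real.sqrt 2 ≤ Real.sqrt (‖v - w‖ ^ 2) := Real.sqrt_le_sqrt h3
      _ = ‖v - w‖ := Real.sqrt_sq (norm_nonneg _)
  have sqrt2_gt_one : (1 : ℝ) < Real.sqrt 2 := by
    rw [show (1:ℝ) = Real.sqrt 1 from (Real.sqrt_one).symm]
    exact Real.sqrt_lt_sqrt (by norm_num) (by norm_num)
  -- Part 1
  have part1 : ∀ ω ∈ Ω, ω ≠ 0 →
      nearestNeighbours Ω ω = {(0 : EuclideanSpace ℝ (Fin K))} := by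
    intro ω hω hω0
    have hnω : ‖(0 : EuclideanSpace ℝ (Fin K)) - ω‖ = 1 := by
      rw [zero_sub, norm_neg]; exact hnorm ω hω hω0
    ext ϖ
    simp only [Set.mem_singleton_iff]
    constructor
    · rintro ⟨hϖΩ, hϖω, hmin⟩
      by_contra hϖ0
      have h1 : ‖ϖ - ω‖ ≤ 1 := hnω ▸ hmin 0 h0Ω (Ne.symm hω0)
      have h2 : Real.sqrt 2 ≤ ‖ϖ - ω‖ := hdist ϖ hϖΩ ω hω hϖ0 hω0 hϖω
      linarith
    · rintro rfl
      refine ⟨h0Ω, Ne.symm hω0, fun ϖ' hϖ' hϖ'ω => ?_⟩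
      rw [hnω]
      rcases eq_or_ne ϖ' 0 with rfl | hϖ'0
      · rw [hnω]
      · exact le_trans (le_of_lt sqrt2_gt_one) (hdist ϖ' hϖ' ω hω hϖ'0 hω0 hϖ'ω)
  -- Part 2
  have part2 : nearestNeighbours Ω (0 : EuclideanSpace ℝ (Fin K)) = Ω \ {0} := by
    ext ϖ
    simp only [nearestNeighbours, Set.mem_setOf_eq, Set.mem_diff, Set.mem_singleton_iff]
    constructor
    · rintro ⟨hϖΩ, hϖ0, _⟩; exact ⟨hϖΩ, hϖ0⟩
    · rintro ⟨hϖΩ, hϖ0⟩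
      refine ⟨hϖΩ, hϖ0, fun ϖ' hϖ' hϖ'0 => ?_⟩
      rw [sub_zero, sub_zero, hnorm ϖ hϖΩ hϖ0, hnorm ϖ' hϖ' hϖ'0]
  refine ⟨part1, part2, ?_⟩
  intro ω hω
  rcases eq_or_ne ω 0 with rfl | hω0
  · -- center: the sum vanishes
    rw [part2]
    have hcongr : ∑ᶠ ϖ ∈ Ω \ {(0 : EuclideanSpace ℝ (Fin K))},
        σ ϖ • (‖ϖ - 0‖⁻¹ • (ϖ - 0)) = ∑ᶠ ϖ ∈ Ω \ {(0 : EuclideanSpace ℝ (Fin K))}, ϖ := by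
      refine finsum_mem_congr rfl fun ϖ hϖ => ?_
      obtain ⟨hϖΩ, hϖ0⟩ := hϖ
      rw [sub_zero, hσ1 ϖ hϖΩ hϖ0, hnorm ϖ hϖΩ hϖ0]
      simp
    rw [hcongr]
    -- identify Ω \ {0} with a finset
    set T : Finset (EuclideanSpace ℝ (Fin K)) :=
      Finset.image (fun i : Fin K => EuclideanSpace.single i (1:ℝ)) Finset.univ ∪
      Finset.image (fun i : Fin K => -EuclideanSpace.single i (1:ℝ)) Finset.univ with hT
    have hTset : (T : Set (EuclideanSpace ℝ (Fin K))) = Ω \ {0} := by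
      ext v
      simp only [hT, Finset.coe_union, Finset.coe_image, Finset.coe_univ, Set.image_univ,
        Set.mem_union, Set.mem_range, Set.mem_diff, Set.mem_singleton_iff, hΩ,
        Set.mem_insert_iff, Set.mem_setOf_eq]
      constructor
      · rintro (⟨i, rfl⟩ | ⟨i, rfl⟩)
        · exact ⟨Or.inr ⟨i, Or.inl rfl⟩, single_ne_zero' i⟩
        · refine ⟨Or.inr ⟨i, Or.inr rfl⟩, ?_⟩
          simpa [neg_eq_zero] using single_ne_zero' i
      · rintro ⟨rfl | ⟨i, rfl | rfl⟩, hv0⟩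
        · exact absurd rfl hv0
        · exact Or.inl ⟨i, rfl⟩
        · exact Or.inr ⟨i, rfl⟩
    rw [← hTset, finsum_mem_coe_finset]
    have hdisj : Disjoint
        (Finset.image (fun i : Fin K => EuclideanSpace.single i (1:ℝ)) Finset.univ)
        (Finset.image (fun i : Fin K => -EuclideanSpace.single i (1:ℝ)) Finset.univ) := by
      rw [Finset.disjoint_left]
      rintro v hv hv'
      simp only [Finset.mem_image, Finset.mem_univ, true_and] at hv hv'
      obtain ⟨i, rfl⟩ := hv
      obtain ⟨j, hj⟩ := hv'
      exact single_ne_neg i j hj.symm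
    have hinj1 : Function.Injective (fun i : Fin K => EuclideanSpace.single i (1:ℝ)) := by
      intro i j h
      by_contra hij
      have := congrArg (fun x : EuclideanSpace ℝ (Fin K) => x i) h
      simp only [EuclideanSpace.single_apply, if_pos rfl, if_neg hij] at this
      norm_num at this
    have hinj2 : Function.Injective (fun i : Fin K => -EuclideanSpace.single i (1:ℝ)) := by
      intro i j h
      exact hinj1 (neg_injective h)
    rw [hT, Finset.sum_union hdisj,
      Finset.sum_image (fun i _ j _ h => hinj1 h),
      Finset.sum_image (fun i _ j _ h => hinj2 h)]
    simp [Finset.sum_neg_distrib]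
  · -- vertex: the sum is over {0}
    rw [part1 ω hω hω0, finsum_mem_singleton, hσ0, hσ1 ω hω hω0, zero_sub, norm_neg,
      hnorm ω hω hω0]
    simp
end
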